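/- The operators LS and MLS are not monotonic: there exist a finite strategic game H and restrictions G ⊆ G' of H such that LS(G) ⊄ LS(G') and MLS(G) ⊄ MLS(G'). Concretely, let H be the two-player game with row strategies {A, B}, column strategy {X}, and payoffs (A,X) = (1,0), (B,X) = (0,0); then for G = ({B},{X}) and G' = H one has G ⊆ G', LS(G) = MLS(G) = ({B},{X}), and LS(H) = MLS(H) = ({A},{X}), so neither LS(G) ⊆ LS(G') nor MLS(G) ⊆ MLS(G'). -/

import Mathlib

open Function

/-- The opponents' part of the joint strategy `t` lies in the restriction `G`. -/
def OppIn {ι : Type*} [DecidableEq ι] {σ : ι → Type*} (G : ∀ i, Set (σ i)) (i : ι) (t : ∀ j, σ j) : Prop :=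
  ∀ j, j ≠ i → t j ∈ G j

/-- `s'` strictly dominates `s` on the restriction `G` (pure strategies). -/
def SDom {ι : Type*} [DecidableEq ι] {σ : ι → Type*} (p : ι → (∀ j, σ j) → ℝ) (G : ∀ i, Set (σ i))
    (i : ι) (s' s : σ i) : Prop :=
  ∀ t : ∀ j, σ j, OppIn G i t → p i (update t i s) < p i (update t i s')

/-- `s'` weakly dominates `s` on the restriction `G` (pure strategies). -/
def WDom {ι : Type*} [DecidableEq ι] {σ : ι → Type*} (p : ι → (∀ j, σ j) → ℝ) (G : ∀ i, Set (σ i))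
    (i : ι) (s' s : σ i) : Prop :=
  (∀ t : ∀ j, σ j, OppIn G i t → p i (update t i s) ≤ p i (update t i s')) ∧
  (∃ t : ∀ j, σ j, OppIn G i t ∧ p i (update t i s) < p i (update t i s'))

/-- Probability distributions over a finite type with support contained in `A`. -/
def Mixed {α : Type*} [Fintype α] (A : Set α) : Set (α → ℝ) :=
  {m | (∀ a, 0 ≤ m a) ∧ ∑ a, m a = 1 ∧ ∀ a, m a ≠ 0 → a ∈ A}

/-- Expected payoff of player `i` using mixed strategy `m` against `t₋ᵢ`. -/
def epay {ι : Type*} [DecidableEq ι] {σ : ι → Type*} [∀ i, Fintype (σ i)]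
    (p : ι → (∀ j, σ j) → ℝ) (i : ι) (m : σ i → ℝ) (t : ∀ j, σ j) : ℝ :=
  ∑ a, m a * p i (update t i a)

/-- The mixed strategy `m` strictly dominates `s` on `G`. -/
def MSDom {ι : Type*} [DecidableEq ι] {σ : ι → Type*} [∀ i, Fintype (σ i)]
    (p : ι → (∀ j, σ j) → ℝ) (G : ∀ i, Set (σ i)) (i : ι) (m : σ i → ℝ) (s : σ i) : Prop :=
  ∀ t : ∀ j, σ j, OppIn G i t → p i (update t i s) < epay p i m t

/-- The mixed strategy `m` weakly dominates `s` on `G`. -/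
def MWDom {ι : Type*} [DecidableEq ι] {σ : ι → Type*} [∀ i, Fintype (σ i)]
    (p : ι → (∀ j, σ j) → ℝ) (G : ∀ i, Set (σ i)) (i : ι) (m : σ i → ℝ) (s : σ i) : Prop :=
  (∀ t : ∀ j, σ j, OppIn G i t → p i (update t i s) ≤ epay p i m t) ∧
  (∃ t : ∀ j, σ j, OppIn G i t ∧ p i (update t i s) < epay p i m t)

/-- Local elimination of strategies strictly dominated by a pure strategy. -/
def LS {ι : Type*} [DecidableEq ι] {σ : ι → Type*} (p : ι → (∀ j, σ j) → ℝ)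
    (G : ∀ i, Set (σ i)) : ∀ i, Set (σ i) :=
  fun i => {s | s ∈ G i ∧ ¬ ∃ s' ∈ G i, SDom p G i s' s}

/-- Global elimination of strategies strictly dominated by a pure strategy. -/
def GS {ι : Type*} [DecidableEq ι] {σ : ι → Type*} (p : ι → (∀ j, σ j) → ℝ)
    (G : ∀ i, Set (σ i)) : ∀ i, Set (σ i) :=
  fun i => {s | s ∈ G i ∧ ¬ ∃ s' : σ i, SDom p G i s' s}

/-- Local elimination of strategies weakly dominated by a pure strategy. -/
def LW {ι : Type*} [DecidableEq ι] {σ : ι → Type*} (p : ι → (∀ j, σ j) → ℝ)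
    (G : ∀ i, Set (σ i)) : ∀ i, Set (σ i) :=
  fun i => {s | s ∈ G i ∧ ¬ ∃ s' ∈ G i, WDom p G i s' s}

/-- Global elimination of strategies weakly dominated by a pure strategy. -/
def GW {ι : Type*} [DecidableEq ι] {σ : ι → Type*} (p : ι → (∀ j, σ j) → ℝ)
    (G : ∀ i, Set (σ i)) : ∀ i, Set (σ i) :=
  fun i => {s | s ∈ G i ∧ ¬ ∃ s' : σ i, WDom p G i s' s}

/-- Local elimination of strategies strictly dominated by a mixed strategy. -/
def MLS {ι : Type*} [DecidableEq ι] {σ : ι → Type*} [∀ i, Fintype (σ i)] (p : ι → (∀ j, σ j) → ℝ)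
    (G : ∀ i, Set (σ i)) : ∀ i, Set (σ i) :=
  fun i => {s | s ∈ G i ∧ ¬ ∃ m ∈ Mixed (G i), MSDom p G i m s}

/-- Global elimination of strategies strictly dominated by a mixed strategy. -/
def MGS {ι : Type*} [DecidableEq ι] {σ : ι → Type*} [∀ i, Fintype (σ i)] (p : ι → (∀ j, σ j) → ℝ)
    (G : ∀ i, Set (σ i)) : ∀ i, Set (σ i) :=
  fun i => {s | s ∈ G i ∧ ¬ ∃ m ∈ Mixed (Set.univ : Set (σ i)), MSDom p G i m s}

/-- Local elimination of strategies weakly dominated by a mixed strategy. -/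
def MLW {ι : Type*} [DecidableEq ι] {σ : ι → Type*} [∀ i, Fintype (σ i)] (p : ι → (∀ j, σ j) → ℝ)
    (G : ∀ i, Set (σ i)) : ∀ i, Set (σ i) :=
  fun i => {s | s ∈ G i ∧ ¬ ∃ m ∈ Mixed (G i), MWDom p G i m s}

/-- Global elimination of strategies weakly dominated by a mixed strategy. -/
def MGW {ι : Type*} [DecidableEq ι] {σ : ι → Type*} [∀ i, Fintype (σ i)] (p : ι → (∀ j, σ j) → ℝ)
    (G : ∀ i, Set (σ i)) : ∀ i, Set (σ i) :=
  fun i => {s | s ∈ G i ∧ ¬ ∃ m ∈ Mixed (Set.univ : Set (σ i)), MWDom p G i m s}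

/-! The concrete game from Section 3: players are `Bool` (`true` = row player,
`false` = column player), row strategies `Fin 2` (`0 = A, 1 = B`), column
strategy `Fin 1` (`0 = X`).  Payoffs: (A,X) = (1,0), (B,X) = (0,0). -/

/-- Strategy sets of the two players. -/
def Str17 : Bool → Type := fun b => cond b (Fin 2) (Fin 1)

instance (b : Bool) : Fintype (Str17 b) := by
  cases b
  · exact inferInstanceAs (Fintype (Fin 1))
  · exact inferInstanceAs (Fintype (Fin 2))

instance (b : Bool) : Nonempty (Str17 b) := by
  cases b
  · exact inferInstanceAs (Nonempty (Fin 1))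
  · exact inferInstanceAs (Nonempty (Fin 2))

/-- The payoff functions: row player gets 1 on A and 0 on B, column player gets 0. -/
def pay17 : Bool → (∀ j, Str17 j) → ℝ
  | true => fun t => ![(1 : ℝ), 0] (t true)
  | false => fun _ => 0

/-- The restriction G = ({B}, {X}). -/
def GB17 : ∀ b, Set (Str17 b)
  | true => ({1} : Set (Fin 2))
  | false => ({0} : Set (Fin 1))

/-- The restriction ({A}, {X}). -/
def GA17 : ∀ b, Set (Str17 b)
  | true => ({0} : Set (Fin 2))
  | false => ({0} : Set (Fin 1))

instance : OfNat (Str17 true) 0 := inferInstanceAs (OfNat (Fin 2) 0)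
instance : OfNat (Str17 true) 1 := inferInstanceAs (OfNat (Fin 2) 1)
instance : OfNat (Str17 false) 0 := inferInstanceAs (OfNat (Fin 1) 0)

lemma str_true_cases (s : Str17 true) : s = 0 ∨ s = 1 := by
  have h : ∀ x : Fin 2, x = 0 ∨ x = 1 := by decide
  exact h s

def t017 : ∀ j, Str17 j
  | true => (0 : Fin 2)
  | false => (0 : Fin 1)

def t117 : ∀ j, Str17 j
  | true => (1 : Fin 2)
  | false => (0 : Fin 1)

lemma pay17_updA (t : ∀ j, Str17 j) :
    pay17 true (Function.update t true 0) = 1 := by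
  simp [pay17]

lemma pay17_updB (t : ∀ j, Str17 j) :
    pay17 true (Function.update t true 1) = 0 := by
  simp [pay17]

lemma pay17_false' (t : ∀ j, Str17 j) : pay17 false t = 0 := rfl

lemma oppin_t017 (G : ∀ b, Set (Str17 b)) (h : (0 : Fin 1) ∈ G false) :
    OppIn G true t017 := by
  intro j hj
  cases j
  · exact h
  · exact absurd rfl hj

lemma oppin_t117_false (G : ∀ b, Set (Str17 b)) (h : (1 : Fin 2) ∈ G true) :
    OppIn G false t117 := by
  intro j hj
  cases j
  · exact absurd rfl hj
  · exact h

lemma oppin_t017_false (G : ∀ b, Set (Str17 b)) (h : (0 : Fin 2) ∈ G true) :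
    OppIn G false t017 := by
  intro j hj
  cases j
  · exact absurd rfl hj
  · exact h

lemma epay_true (m : Str17 true → ℝ) (t : ∀ j, Str17 j) :
    epay pay17 true m t = m 0 := by
  show ∑ a : Fin 2, m a * pay17 true (Function.update t true a) = m 0
  rw [Fin.sum_univ_two]
  rw [show pay17 true (Function.update t true (0 : Fin 2)) = 1 from pay17_updA t]
  rw [show pay17 true (Function.update t true (1 : Fin 2)) = 0 from pay17_updB t]
  ring_nf
  rfl

lemma epay_false (m : Str17 false → ℝ) (t : ∀ j, Str17 j) :
    epay pay17 false m t = 0 := by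
  show ∑ a : Fin 1, m a * pay17 false (Function.update t false a) = 0
  simp [pay17_false']

/-- LS and MLS are not monotonic: for the game above and G = ({B},{X}) ⊆ H one
has LS(G) = MLS(G) = G, LS(H) = MLS(H) = ({A},{X}), and neither LS(G) ⊆ LS(H)
nor MLS(G) ⊆ MLS(H). -/
theorem LS_MLS_not_monotone :
    GB17 ≤ (⊤ : ∀ b, Set (Str17 b)) ∧
    LS pay17 GB17 = GB17 ∧ MLS pay17 GB17 = GB17 ∧
    LS pay17 ⊤ = GA17 ∧ MLS pay17 ⊤ = GA17 ∧
    ¬ LS pay17 GB17 ≤ LS pay17 ⊤ ∧ ¬ MLS pay17 GB17 ≤ MLS pay17 ⊤ := by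
  have hLSB : LS pay17 GB17 = GB17 := by
    funext b
    ext s
    simp only [LS, Set.mem_setOf_eq, and_iff_left_iff_imp]
    intro hs ⟨s', hs', hdom⟩
    cases b
    · have := hdom t117 (oppin_t117_false _ rfl)
      rw [pay17_false', pay17_false'] at this
      exact lt_irrefl _ this
    · have hs1 : s = 1 := hs
      have hs'1 : s' = 1 := hs'
      subst hs1; subst hs'1
      have := hdom t017 (oppin_t017 _ rfl)
      rw [pay17_updB] at this
      exact lt_irrefl _ this
  have hMLSB : MLS pay17 GB17 = GB17 := by
    funext b
    ext s
    simp only [MLS, Set.mem_setOf_eq, and_iff_left_iff_imp]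
    intro hs ⟨m, hm, hdom⟩
    cases b
    · have := hdom t117 (oppin_t117_false _ rfl)
      rw [pay17_false', epay_false] at this
      exact lt_irrefl _ this
    · have hs1 : s = 1 := hs
      subst hs1
      have h0 : m 0 = 0 := by
        by_contra h
        have h1 : (0 : Str17 true) ∈ GB17 true := hm.2.2 0 h
        have : (0 : Fin 2) = 1 := h1
        exact absurd this (by decide)
      have := hdom t017 (oppin_t017 _ rfl)
      rw [pay17_updB, epay_true, h0] at this
      exact lt_irrefl _ this
  have hLST : LS pay17 ⊤ = GA17 := by
    funext b
    ext s
    cases b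
    · constructor
      · intro _; exact Fin.fin_one_eq_zero s
      · intro _
        refine ⟨trivial, ?_⟩
        rintro ⟨s', -, hdom⟩
        have := hdom t017 (oppin_t017_false _ trivial)
        rw [pay17_false', pay17_false'] at this
        exact lt_irrefl _ this
    · constructor
      · rintro ⟨-, hnd⟩
        rcases str_true_cases s with h | h
        · subst h; rfl
        · subst h
          exact absurd ⟨0, trivial, fun t _ => by
            rw [pay17_updA, pay17_updB]; norm_num⟩ hnd
      · intro hs
        have hs0 : s = 0 := hs
        subst hs0
        refine ⟨trivial, ?_⟩
        rintro ⟨s', -, hdom⟩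
        have h := hdom t017 (oppin_t017 _ trivial)
        rcases str_true_cases s' with h' | h' <;> subst h'
        · rw [pay17_updA] at h; exact lt_irrefl _ h
        · rw [pay17_updA, pay17_updB] at h; norm_num at h
  have hMLST : MLS pay17 ⊤ = GA17 := by
    funext b
    ext s
    cases b
    · constructor
      · intro _; exact Fin.fin_one_eq_zero s
      · intro _
        refine ⟨trivial, ?_⟩
        rintro ⟨m, -, hdom⟩
        have := hdom t017 (oppin_t017_false _ trivial)
        rw [pay17_false', epay_false] at this
        exact lt_irrefl _ this
    · constructor
      · rintro ⟨-, hnd⟩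
        rcases str_true_cases s with h | h
        · subst h; rfl
        · subst h
          refine absurd ⟨![1, 0], ⟨?_, ?_, fun a _ => trivial⟩, ?_⟩ hnd
          · intro a
            have : ∀ x : Fin 2, (0:ℝ) ≤ ![(1:ℝ), 0] x := by
              intro x; fin_cases x <;> norm_num
            exact this a
          · show ∑ a : Fin 2, ![(1:ℝ),0] a = 1
            rw [Fin.sum_univ_two]; norm_num
          · intro t _
            rw [pay17_updB, epay_true (![1, 0] : Str17 true → ℝ)]
            exact zero_lt_one
      · intro hs
        have hs0 : s = 0 := hs
        subst hs0
        refine ⟨trivial, ?_⟩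
        rintro ⟨m, hm, hdom⟩
        have hsum : m 0 + m 1 = 1 := by
          have h2 : ∑ a : Fin 2, m a = 1 := hm.2.1
          rw [Fin.sum_univ_two (f := fun a : Fin 2 => m a)] at h2
          exact h2
        have h1 : (0:ℝ) ≤ m 1 := hm.1 1
        have := hdom t017 (oppin_t017 _ trivial)
        rw [pay17_updA, epay_true] at this
        linarith
  refine ⟨fun b => le_top, hLSB, hMLSB, hLST, hMLST, ?_, ?_⟩
  · rw [hLSB, hLST]
    intro h
    have h1 : (1 : Fin 2) ∈ GA17 true := h true rfl
    have : (1 : Fin 2) = 0 := h1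
    exact absurd this (by decide)
  · rw [hMLSB, hMLST]
    intro h
    have h1 : (1 : Fin 2) ∈ GA17 true := h true rfl
    have : (1 : Fin 2) = 0 := h1
    exact absurd this (by decide)
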